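/- Let u = t₁v₁ + … + tₙvₙ + b₁e₁ + b₂e₂ + b₋₂e₋₂ + … + bₘeₘ + b₋ₘe₋ₘ (the coefficient of e₋₁ is 0) and a ∈ R. Then the transvection T₁(u, a) = T_{e₁, −u}(−a) is an R-linear map on V and its matrix with respect to the ordered basis (v₁, …, vₙ, e₁, e₋₁, e₂, e₋₂, …, eₘ, e₋ₘ) is M₁(u, a); that is, T₁(u, a)(w) = M₁(u, a)·w for every coordinate column vector w. -/

import Mathlib

open Matrix BigOperators

namespace OddUnitary

/-- A pseudoinvolution on a commutative ring `R`: `sigma` is the additive map `r ↦ r̄`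
satisfying `σ(r₁r₂) = σ(r₂)·σ(1)⁻¹·σ(r₁)` and `σ(σ(r)) = r`; the field `i` is the
inverse `1̄⁻¹` of the unit `1̄ = sigma 1`. -/
structure PseudoInv (R : Type*) [CommRing R] where
  sigma : R →+ R
  i : R
  bar_one_mul_i : sigma 1 * i = 1
  i_mul_bar_one : i * sigma 1 = 1
  bar_mul : ∀ r s : R, sigma (r * s) = sigma s * i * sigma r
  bar_bar : ∀ r : R, sigma (sigma r) = r

variable {R : Type*} [CommRing R]

/-- Entry `(i, j)` of the matrix `ψ̃_{s/2} ⊥ φ`: hyperbolic blocks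
`ψ̃₁ = [[0, 1], [-1̄, 0]]` occupying the first `s` (an even number) indices,
followed by the `n × n` form matrix `φ`. -/
def psiEnt (P : PseudoInv R) {n : ℕ} (φ : Matrix (Fin n) (Fin n) R) (s i j : ℕ) : R :=
  if i < s ∧ j < s then
    (if j = i + 1 ∧ i % 2 = 0 then 1
     else if i = j + 1 ∧ j % 2 = 0 then -(P.sigma 1) else 0)
  else if h : s ≤ i ∧ i < s + n ∧ s ≤ j ∧ j < s + n then
    φ ⟨i - s, by omega⟩ ⟨j - s, by omega⟩
  else 0

/-- Entry `(i, j)` of the matrix `ψ̃′_{s/2} ⊥ (1̄⁻¹)²·φ`, where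
`ψ̃′₁ = [[0, -1̄⁻¹], [1, 0]]`. -/
def psi'Ent (P : PseudoInv R) {n : ℕ} (φ : Matrix (Fin n) (Fin n) R) (s i j : ℕ) : R :=
  if i < s ∧ j < s then
    (if j = i + 1 ∧ i % 2 = 0 then -P.i
     else if i = j + 1 ∧ j % 2 = 0 then 1 else 0)
  else if h : s ≤ i ∧ i < s + n ∧ s ≤ j ∧ j < s + n then
    P.i * P.i * φ ⟨i - s, by omega⟩ ⟨j - s, by omega⟩
  else 0

/-- The form matrix `Ψ = ψ̃ₘ ⊥ φ` of Petrov's odd hyperbolic unitary group. -/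
def PsiM (P : PseudoInv R) {n : ℕ} (φ : Matrix (Fin n) (Fin n) R) (m : ℕ) :
    Matrix (Fin (n + 2*m)) (Fin (n + 2*m)) R :=
  fun i j => psiEnt P φ (2*m) i j

/-- The row vector `c = (1, 0, …, 0) ∈ R^{n+2m-1}`. -/
def crow (R : Type*) [CommRing R] (n m : ℕ) : Fin (n + 2*m - 1) → R :=
  fun j => if (j : ℕ) = 0 then 1 else 0

/-- The row vector `d = (-1̄⁻¹, 0, …, 0) ∈ R^{n+2m-1}`. -/
def drow (P : PseudoInv R) (n m : ℕ) : Fin (n + 2*m - 1) → R :=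
  fun j => if (j : ℕ) = 0 then -P.i else 0

/-- `μ`, the lower-right `(n+2m-1) × (n+2m-1)` block of `Ψ`. -/
def muM (P : PseudoInv R) {n : ℕ} (φ : Matrix (Fin n) (Fin n) R) (m : ℕ) :
    Matrix (Fin (n + 2*m - 1)) (Fin (n + 2*m - 1)) R :=
  fun i j => psiEnt P φ (2*m) ((i : ℕ) + 1) ((j : ℕ) + 1)

/-- `ρ`, the lower-right `(n+2m-1) × (n+2m-1)` block of `Ψ⁻¹`. -/
noncomputable def rhoM (P : PseudoInv R) {n : ℕ} (φ : Matrix (Fin n) (Fin n) R) (m : ℕ) :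
    Matrix (Fin (n + 2*m - 1)) (Fin (n + 2*m - 1)) R :=
  fun i j => (PsiM P φ m)⁻¹ ⟨(i : ℕ) + 1, by omega⟩ ⟨(j : ℕ) + 1, by omega⟩

/-- `α = I_{n+2m-1} + dᵗ·v̄·μ`. -/
def alphaM (P : PseudoInv R) {n : ℕ} (φ : Matrix (Fin n) (Fin n) R) (m : ℕ)
    (v : Fin (n + 2*m - 1) → R) : Matrix (Fin (n + 2*m - 1)) (Fin (n + 2*m - 1)) R :=
  1 + vecMulVec (drow P n m) (fun k => P.sigma (v k)) * muM P φ m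

/-- `β = I_{n+2m-1} - 1̄⁻¹·ρ·v̄ᵗ·c`. -/
noncomputable def betaM (P : PseudoInv R) {n : ℕ} (φ : Matrix (Fin n) (Fin n) R) (m : ℕ)
    (v : Fin (n + 2*m - 1) → R) : Matrix (Fin (n + 2*m - 1)) (Fin (n + 2*m - 1)) R :=
  1 - P.i • vecMulVec (rhoM P φ m *ᵥ fun k => P.sigma (v k)) (crow R n m)

/-- The Vaserstein-type matrix `L(v) = [[1, 0], [vᵗ, α]]` (block form). -/
def Lmat (P : PseudoInv R) {n : ℕ} (φ : Matrix (Fin n) (Fin n) R) (m : ℕ)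
    (v : Fin (n + 2*m - 1) → R) : Matrix (Fin (n + 2*m)) (Fin (n + 2*m)) R :=
  fun i j =>
    if hi : (i : ℕ) = 0 then (if (j : ℕ) = 0 then 1 else 0)
    else if hj : (j : ℕ) = 0 then v ⟨(i : ℕ) - 1, by omega⟩
    else alphaM P φ m v ⟨(i : ℕ) - 1, by omega⟩ ⟨(j : ℕ) - 1, by omega⟩

/-- The Vaserstein-type matrix `L(v)* = [[1, v], [0, β]]` (block form). -/
noncomputable def Lstar (P : PseudoInv R) {n : ℕ} (φ : Matrix (Fin n) (Fin n) R) (m : ℕ)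
    (v : Fin (n + 2*m - 1) → R) : Matrix (Fin (n + 2*m)) (Fin (n + 2*m)) R :=
  fun i j =>
    if hi : (i : ℕ) = 0 then (if hj : (j : ℕ) = 0 then 1 else v ⟨(j : ℕ) - 1, by omega⟩)
    else if hj : (j : ℕ) = 0 then 0
    else betaM P φ m v ⟨(i : ℕ) - 1, by omega⟩ ⟨(j : ℕ) - 1, by omega⟩

/-- `q(a₂, …, a_{n+2m-1}) = 1̄⁻¹·(ā₂, …, ā_{n+2m-1})·(ψ̃_{m-1} ⊥ φ)·(a₂, …, a_{n+2m-1})ᵗ`. -/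
def qform (P : PseudoInv R) {n : ℕ} (φ : Matrix (Fin n) (Fin n) R) (m : ℕ)
    (v : Fin (n + 2*m - 1) → R) : R :=
  P.i * ∑ i : Fin (n + 2*m - 2), ∑ j : Fin (n + 2*m - 2),
    P.sigma (v ⟨(i : ℕ) + 1, by omega⟩) * psiEnt P φ (2*m - 2) i j * v ⟨(j : ℕ) + 1, by omega⟩

/-- Condition (D) on `v = (a₁, …, a_{n+2m-1})`:
`ā₁ - a₁ = 1̄⁻¹·(ā₂, …)·(ψ̃_{m-1} ⊥ φ)·(a₂, …)ᵗ = q(a₂, …, a_{n+2m-1})`. -/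
def condD (P : PseudoInv R) {n : ℕ} (φ : Matrix (Fin n) (Fin n) R) (m : ℕ)
    (hn : 1 ≤ n) (hm : 2 ≤ m) (v : Fin (n + 2*m - 1) → R) : Prop :=
  P.sigma (v ⟨0, by omega⟩) - v ⟨0, by omega⟩ = qform P φ m v

/-- Condition (E) on `v = (a₁, …, a_{n+2m-1})`:
`σ(1̄·a₁) - 1̄·a₁ = (ā₂, …)·(ψ̃′_{m-1} ⊥ (1̄⁻¹)²·φ)ᵗ·(a₂, …)ᵗ`. -/
def condE (P : PseudoInv R) {n : ℕ} (φ : Matrix (Fin n) (Fin n) R) (m : ℕ)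
    (hn : 1 ≤ n) (hm : 2 ≤ m) (v : Fin (n + 2*m - 1) → R) : Prop :=
  P.sigma (P.sigma 1 * v ⟨0, by omega⟩) - P.sigma 1 * v ⟨0, by omega⟩ =
    ∑ i : Fin (n + 2*m - 2), ∑ j : Fin (n + 2*m - 2),
      P.sigma (v ⟨(i : ℕ) + 1, by omega⟩) * psi'Ent P φ (2*m - 2) j i * v ⟨(j : ℕ) + 1, by omega⟩

/-- The form `B(x, y) = (x mapped entrywise by σ)ᵗ·1̄⁻¹·Ψ·y` on column vectors. -/
def Bform (P : PseudoInv R) {n : ℕ} (φ : Matrix (Fin n) (Fin n) R) (m : ℕ)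
    (x y : Fin (n + 2*m) → R) : R :=
  ∑ i, ∑ j, P.sigma (x i) * P.i * PsiM P φ m i j * y j

/-- Entry function of the Gram matrix `G = φ ⊥ ψ̃ₘ` (form matrix `φ` first), in the
ordered basis `(v₁, …, vₙ, e₁, e₋₁, e₂, e₋₂, …, eₘ, e₋ₘ)`. -/
def gEnt (P : PseudoInv R) {n : ℕ} (φ : Matrix (Fin n) (Fin n) R) (i j : ℕ) : R :=
  if h : i < n ∧ j < n then φ ⟨i, by omega⟩ ⟨j, by omega⟩
  else if n ≤ i ∧ n ≤ j then
    (if j = i + 1 ∧ (i - n) % 2 = 0 then 1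
     else if i = j + 1 ∧ (j - n) % 2 = 0 then -(P.sigma 1) else 0)
  else 0

/-- The Gram matrix `G = φ ⊥ ψ̃ₘ`. -/
def GM (P : PseudoInv R) {n : ℕ} (φ : Matrix (Fin n) (Fin n) R) (m : ℕ) :
    Matrix (Fin (n + 2*m)) (Fin (n + 2*m)) R :=
  fun i j => gEnt P φ i j

/-- The sesquilinear form `⟨x, y⟩ = Σ_{i,j} σ(xᵢ)·1̄⁻¹·G_{ij}·yⱼ` on `V = R^{n+2m}`. -/
def formV (P : PseudoInv R) {n : ℕ} (φ : Matrix (Fin n) (Fin n) R) (m : ℕ)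
    (x y : Fin (n + 2*m) → R) : R :=
  ∑ i, ∑ j, P.sigma (x i) * P.i * GM P φ m i j * y j

/-- The Eichler–Siegel–Dickson transvection
`T_{x,y}(r)(w) = w + x·1̄⁻¹·(⟨y, w⟩ + r·⟨x, w⟩) + y·⟨x, w⟩`. -/
def ESD (P : PseudoInv R) {n : ℕ} (φ : Matrix (Fin n) (Fin n) R) (m : ℕ)
    (x y : Fin (n + 2*m) → R) (r : R) (w : Fin (n + 2*m) → R) : Fin (n + 2*m) → R :=
  w + (P.i * (formV P φ m y w + r * formV P φ m x w)) • x + formV P φ m x w • y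

/-- The basis vector `e₁` (position `n` in the ordered basis). -/
def e1vec (R : Type*) [CommRing R] (n m : ℕ) : Fin (n + 2*m) → R :=
  fun l => if (l : ℕ) = n then 1 else 0

/-- The basis vector `e₋₁` (position `n+1` in the ordered basis). -/
def eneg1vec (R : Type*) [CommRing R] (n m : ℕ) : Fin (n + 2*m) → R :=
  fun l => if (l : ℕ) = n + 1 then 1 else 0

/-- The matrix `M₁(u, a)` of the transvection `T₁(u, a)` in the ordered basis
`(v₁, …, vₙ, e₁, e₋₁, e₂, e₋₂, …, eₘ, e₋ₘ)`; here `u` is the coordinate vector of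
`t₁v₁ + … + tₙvₙ + b₁e₁ + b₂e₂ + b₋₂e₋₂ + … + bₘeₘ + b₋ₘe₋ₘ`. -/
def M1 (P : PseudoInv R) {n : ℕ} (φ : Matrix (Fin n) (Fin n) R) (m : ℕ)
    (u : Fin (n + 2*m) → R) (a : R) : Matrix (Fin (n + 2*m)) (Fin (n + 2*m)) R :=
  fun i j =>
    if hj1 : (j : ℕ) = n + 1 then
      -- the `e₋₁` column
      if hi : (i : ℕ) < n then -u i
      else if hi1 : (i : ℕ) = n then
        -(P.sigma (u ⟨n, by omega⟩) * (P.i * P.i) + a * P.i + u ⟨n, by omega⟩)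
      else if hi2 : (i : ℕ) = n + 1 then 1
      else -u i
    else if hi1 : (i : ℕ) = n then
      -- the `e₁` row
      if hj : (j : ℕ) < n then
        -((P.i * P.i) * ∑ l : Fin n, P.sigma (u ⟨(l : ℕ), by omega⟩) * φ l ⟨(j : ℕ), hj⟩)
      else if hj2 : (j : ℕ) = n then 1
      else if hj3 : ((j : ℕ) - n) % 2 = 0 then
        P.i * P.sigma (u ⟨(j : ℕ) + 1, by omega⟩)
      else -(P.i * P.i) * P.sigma (u ⟨(j : ℕ) - 1, by omega⟩)
    else if (i : ℕ) = (j : ℕ) then 1 else 0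

/-- The matrix `M₋₁(u, a)` of the transvection `T₋₁(u, a)` in the ordered basis
`(v₁, …, vₙ, e₁, e₋₁, e₂, e₋₂, …, eₘ, e₋ₘ)`; here `u` is the coordinate vector of
`t₁v₁ + … + tₙvₙ + b₋₁e₋₁ + b₂e₂ + b₋₂e₋₂ + … + bₘeₘ + b₋ₘe₋ₘ`. -/
def Mneg1 (P : PseudoInv R) {n : ℕ} (φ : Matrix (Fin n) (Fin n) R) (m : ℕ)
    (u : Fin (n + 2*m) → R) (a : R) : Matrix (Fin (n + 2*m)) (Fin (n + 2*m)) R :=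
  fun i j =>
    if hj1 : (j : ℕ) = n then
      -- the `e₁` column
      if hi : (i : ℕ) < n then -u i
      else if hi1 : (i : ℕ) = n then 1
      else if hi2 : (i : ℕ) = n + 1 then
        -P.sigma (u ⟨n + 1, by omega⟩) + a - u ⟨n + 1, by omega⟩
      else -u i
    else if hi1 : (i : ℕ) = n + 1 then
      -- the `e₋₁` row
      if hj : (j : ℕ) < n then
        P.i * ∑ l : Fin n, P.sigma (u ⟨(l : ℕ), by omega⟩) * φ l ⟨(j : ℕ), hj⟩
      else if hj2 : (j : ℕ) = n + 1 then 1
      else if hj3 : ((j : ℕ) - n) % 2 = 0 then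
        -P.sigma (u ⟨(j : ℕ) + 1, by omega⟩)
      else P.i * P.sigma (u ⟨(j : ℕ) - 1, by omega⟩)
    else if (i : ℕ) = (j : ℕ) then 1 else 0

/-- The permutation matrix `P = [[0_{2m×n}, I_{2m}], [Iₙ, 0_{n×2m}]]`. -/
def Pperm (R : Type*) [CommRing R] (n m : ℕ) :
    Matrix (Fin (n + 2*m)) (Fin (n + 2*m)) R :=
  fun i j =>
    if (i : ℕ) < 2*m then (if (j : ℕ) = n + i then 1 else 0)
    else (if (j : ℕ) = (i : ℕ) - 2*m then 1 else 0)

/-- The coordinate vector of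
`u₁ = -a_{2m}v₁ - … - a_{n+2m-1}vₙ - a₂e₂ - a₃e₋₂ - … - a_{2m-2}eₘ - a_{2m-1}e₋ₘ`. -/
def u1vec {R : Type*} [CommRing R] {n m : ℕ} (hm : 2 ≤ m)
    (v : Fin (n + 2*m - 1) → R) : Fin (n + 2*m) → R :=
  fun l =>
    if hl : (l : ℕ) < n then -v ⟨2*m - 1 + (l : ℕ), by omega⟩
    else if hl1 : (l : ℕ) = n ∨ (l : ℕ) = n + 1 then 0
    else -v ⟨(l : ℕ) - n - 1, by omega⟩

/-- The coordinate vector of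
`u₂ = Σₖ 1̄⁻¹·(ā_{2m}·(φ⁻¹)_{k1} + … + ā_{n+2m-1}·(φ⁻¹)_{kn})·vₖ
      - (1̄⁻¹)²·ā₃e₂ + 1̄⁻¹·ā₂e₋₂ - … - (1̄⁻¹)²·ā_{2m-1}eₘ + 1̄⁻¹·ā_{2m-2}e₋ₘ`. -/
noncomputable def u2vec (P : PseudoInv R) {n : ℕ} (φ : Matrix (Fin n) (Fin n) R) {m : ℕ} (hm : 2 ≤ m)
    (v : Fin (n + 2*m - 1) → R) : Fin (n + 2*m) → R :=
  fun l =>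
    if hl : (l : ℕ) < n then
      P.i * ∑ j : Fin n, P.sigma (v ⟨2*m - 1 + (j : ℕ), by omega⟩) * φ⁻¹ ⟨(l : ℕ), hl⟩ j
    else if hl1 : (l : ℕ) = n ∨ (l : ℕ) = n + 1 then 0
    else if hl2 : ((l : ℕ) - n) % 2 = 0 then
      -(P.i * P.i) * P.sigma (v ⟨(l : ℕ) - n, by omega⟩)
    else P.i * P.sigma (v ⟨(l : ℕ) - n - 2, by omega⟩)

/-- for `u = t₁v₁ + … + tₙvₙ + b₁e₁ + b₂e₂ + b₋₂e₋₂ + … + bₘeₘ + b₋ₘe₋ₘ`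
(coefficient of `e₋₁` equal to `0`) and `a ∈ R`, the transvection
`T₁(u, a) = T_{e₁, -u}(-a)` acts on coordinate column vectors as the matrix `M₁(u, a)`:
`T₁(u, a)(w) = M₁(u, a)·w` for every `w` (in particular it is `R`-linear). -/
lemma sum_trunc {S : Type*} [AddCommMonoid S] {a b : ℕ} (f : Fin (a+b) → S)
    (hf : ∀ i : Fin (a+b), a ≤ (i:ℕ) → f i = 0) :
    ∑ i, f i = ∑ i : Fin a, f ⟨(i:ℕ), by omega⟩ := by
  classical
  set F : ℕ → S := fun k => if h : k < a + b then f ⟨k, h⟩ else 0 with hF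
  have h1 : ∑ i : Fin (a+b), f i = ∑ k ∈ Finset.range (a+b), F k := by
    rw [← Fin.sum_univ_eq_sum_range]
    exact Finset.sum_congr rfl (fun i _ => by simp [hF, i.isLt])
  have h2 : ∑ k ∈ Finset.range (a+b), F k = ∑ k ∈ Finset.range a, F k := by
    refine (Finset.sum_subset (Finset.range_subset_range.mpr (Nat.le_add_right a b)) ?_).symm
    intro k hk hk'
    simp only [Finset.mem_range] at hk hk'
    rw [hF]
    simp only [dif_pos hk]
    exact hf _ (by simpa using hk')
  have h3 : ∑ k ∈ Finset.range a, F k = ∑ i : Fin a, F i := (Fin.sum_univ_eq_sum_range F a).symm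
  rw [h1, h2, h3]
  refine Finset.sum_congr rfl (fun i _ => ?_)
  rw [hF]
  simp only [dif_pos (show (i:ℕ) < a + b by omega)]

lemma gEnt_lt {R : Type*} [CommRing R] (P : PseudoInv R) {n : ℕ}
    (φ : Matrix (Fin n) (Fin n) R) {i j : ℕ} (hi : i < n) (hj : j < n) :
    gEnt P φ i j = φ ⟨i, hi⟩ ⟨j, hj⟩ := by
  unfold gEnt; rw [dif_pos ⟨hi, hj⟩]

lemma gEnt_one {R : Type*} [CommRing R] (P : PseudoInv R) {n : ℕ}
    (φ : Matrix (Fin n) (Fin n) R) {i j : ℕ} (hi : n ≤ i) (hj : j = i + 1)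
    (hp : (i - n) % 2 = 0) : gEnt P φ i j = 1 := by
  unfold gEnt
  rw [dif_neg (by omega), if_pos ⟨hi, by omega⟩, if_pos ⟨hj, hp⟩]

lemma gEnt_negbar {R : Type*} [CommRing R] (P : PseudoInv R) {n : ℕ}
    (φ : Matrix (Fin n) (Fin n) R) {i j : ℕ} (hj : n ≤ j) (hi : i = j + 1)
    (hp : (j - n) % 2 = 0) : gEnt P φ i j = -(P.sigma 1) := by
  unfold gEnt
  rw [dif_neg (by omega), if_pos ⟨by omega, hj⟩, if_neg (by omega), if_pos ⟨hi, hp⟩]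

lemma gEnt_eq_zero {R : Type*} [CommRing R] (P : PseudoInv R) {n : ℕ}
    (φ : Matrix (Fin n) (Fin n) R) {i j : ℕ}
    (h1 : ¬(i < n ∧ j < n))
    (h2 : ¬(n ≤ i ∧ n ≤ j ∧ j = i + 1 ∧ (i - n) % 2 = 0))
    (h3 : ¬(n ≤ i ∧ n ≤ j ∧ i = j + 1 ∧ (j - n) % 2 = 0)) :
    gEnt P φ i j = 0 := by
  unfold gEnt
  split_ifs <;> first | rfl | (exfalso; tauto)

theorem T1_matrix {R : Type*} [CommRing R] (P : PseudoInv R)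
    {n m : ℕ} (hn : 1 ≤ n) (hm : 2 ≤ m)
    (φ : Matrix (Fin n) (Fin n) R) (hφ : IsUnit φ.det)
    (hφa : φ = -((φ.map ⇑P.sigma)ᵀ))
    (u : Fin (n + 2*m) → R) (hu : u ⟨n + 1, by omega⟩ = 0) (a : R) :
    ∀ w : Fin (n + 2*m) → R,
      ESD P φ m (e1vec R n m) (-u) (-a) w = M1 P φ m u a *ᵥ w := by
  intro w
  have hNn : n < n + 2*m := by omega
  have hNn1 : n + 1 < n + 2*m := by omega
  have hbar : P.i * P.sigma 1 = 1 := P.i_mul_bar_one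
  have hu' : u ⟨n+1, hNn1⟩ = 0 := hu
  have hF1 : formV P φ m (e1vec R n m) w = w ⟨n+1, hNn1⟩ := by
    rw [formV]
    rw [Finset.sum_eq_single (⟨n, hNn⟩ : Fin (n + 2*m))]
    · rw [Finset.sum_eq_single (⟨n+1, hNn1⟩ : Fin (n + 2*m))]
      · have hG : GM P φ m ⟨n, hNn⟩ ⟨n+1, hNn1⟩ = 1 :=
          gEnt_one P φ (le_refl n) rfl (by simp)
        have he : e1vec R n m ⟨n, hNn⟩ = 1 := by simp [e1vec]
        rw [hG, he]
        have := P.bar_one_mul_i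
        linear_combination (w ⟨n+1, hNn1⟩) * this
      · intro j _ hj
        have hj' : (j:ℕ) ≠ n + 1 := fun h => hj (Fin.ext h)
        have hG : GM P φ m ⟨n, hNn⟩ j = 0 :=
          gEnt_eq_zero P φ (by simp) (by simp; omega) (by simp; omega)
        rw [hG]; ring
      · intro h; exact absurd (Finset.mem_univ _) h
    · intro i _ hi
      have hi' : (i:ℕ) ≠ n := fun h => hi (Fin.ext h)
      have he : e1vec R n m i = 0 := by simp [e1vec, hi']
      rw [he, map_zero]
      simp
    · intro h; exact absurd (Finset.mem_univ _) h
  have hFneg : formV P φ m (-u) w = - formV P φ m u w := by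
    simp [formV, neg_mul, Finset.sum_neg_distrib]
  funext l
  have hml : (M1 P φ m u a *ᵥ w) l = ∑ j, M1 P φ m u a l j * w j := by
    simp [Matrix.mulVec, dotProduct]
  have hesd : ESD P φ m (e1vec R n m) (-u) (-a) w l
      = w l + (P.i * (formV P φ m (-u) w + (-a) * formV P φ m (e1vec R n m) w))
          * e1vec R n m l + formV P φ m (e1vec R n m) w * (-(u l)) := by
    simp [ESD, Pi.add_apply, Pi.smul_apply, smul_eq_mul, mul_comm]
  rw [hml, hesd, hF1, hFneg]
  by_cases hl : (l:ℕ) = n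
  · -- the e₁ row
    have hlval : l = ⟨n, hNn⟩ := Fin.ext hl
    have he1 : e1vec R n m l = 1 := by simp [e1vec, hl]
    have key : ∀ j : Fin (n + 2*m),
        M1 P φ m u a l j * w j
          + P.i * ∑ i, P.sigma (u i) * P.i * GM P φ m i j * w j
        = (if j = (⟨n, hNn⟩ : Fin (n+2*m)) then w ⟨n, hNn⟩ else 0)
          + (if j = (⟨n+1, hNn1⟩ : Fin (n+2*m)) then (-(P.i * a) - u ⟨n, hNn⟩) * w ⟨n+1, hNn1⟩ else 0) := by
      intro j
      rcases lt_or_ge (j:ℕ) n with hjlt | hjge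
      · -- j < n : the φ block
        have hin : ∑ i, P.sigma (u i) * P.i * GM P φ m i j * w j
            = ∑ i : Fin n, P.sigma (u ⟨(i:ℕ), by omega⟩) * P.i * φ i ⟨(j:ℕ), hjlt⟩ * w j := by
          rw [sum_trunc (fun i => P.sigma (u i) * P.i * GM P φ m i j * w j)
            (fun i hi => by
              beta_reduce
              have hG : GM P φ m i j = 0 :=
                gEnt_eq_zero P φ (by omega) (by omega) (by omega)
              rw [hG]; ring)]
          refine Finset.sum_congr rfl (fun i _ => ?_)
          beta_reduce
          have hG : GM P φ m ⟨(i:ℕ), by omega⟩ j = φ i ⟨(j:ℕ), hjlt⟩ := by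
            rw [show GM P φ m ⟨(i:ℕ), by omega⟩ j = gEnt P φ (i:ℕ) (j:ℕ) from rfl,
              gEnt_lt P φ i.isLt hjlt, Fin.eta]
          rw [hG]
        rw [hin]
        have hM : M1 P φ m u a l j
            = -((P.i * P.i) * ∑ i : Fin n, P.sigma (u ⟨(i:ℕ), by omega⟩) * φ i ⟨(j:ℕ), hjlt⟩) := by
          simp only [M1]
          rw [dif_neg (by omega), dif_pos hl, dif_pos hjlt]
        rw [hM, if_neg (by simp [Fin.ext_iff]; omega), if_neg (by simp [Fin.ext_iff]; omega)]
        have h2 : ∑ i : Fin n, P.sigma (u ⟨(i:ℕ), by omega⟩) * P.i * φ i ⟨(j:ℕ), hjlt⟩ * w j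
            = (∑ i : Fin n, P.sigma (u ⟨(i:ℕ), by omega⟩) * φ i ⟨(j:ℕ), hjlt⟩) * (P.i * w j) := by
          rw [Finset.sum_mul]
          exact Finset.sum_congr rfl (fun i _ => by ring)
        rw [h2]
        ring
      · rcases eq_or_lt_of_le hjge with hjn | hjgt
        · -- j = n
          have hjb : j = (⟨n, hNn⟩ : Fin (n+2*m)) := Fin.ext hjn.symm
          have hin : ∑ i, P.sigma (u i) * P.i * GM P φ m i j * w j = 0 := by
            refine Finset.sum_eq_zero (fun i _ => ?_)
            by_cases hi : (i:ℕ) = n + 1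
            · have hieq : i = (⟨n+1, hNn1⟩ : Fin (n+2*m)) := Fin.ext hi
              rw [hieq, hu', map_zero]; ring
            · have hG : GM P φ m i j = 0 :=
                gEnt_eq_zero P φ (by omega) (by omega) (by omega)
              rw [hG]; ring
          have hM : M1 P φ m u a l j = 1 := by
            simp only [M1]
            rw [dif_neg (by omega), dif_pos hl, dif_neg (by omega), dif_pos hjn.symm]
          rw [hM, hin, if_pos hjb, if_neg (by simp [Fin.ext_iff]; omega), hjb]
          ring
        · rcases eq_or_lt_of_le (show n + 1 ≤ (j:ℕ) from hjgt) with hjn1 | hjgt1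
          · -- j = n + 1
            have hjb : j = (⟨n+1, hNn1⟩ : Fin (n+2*m)) := Fin.ext hjn1.symm
            have hin : ∑ i, P.sigma (u i) * P.i * GM P φ m i j * w j
                = P.sigma (u ⟨n, hNn⟩) * P.i * w j := by
              rw [Finset.sum_eq_single (⟨n, hNn⟩ : Fin (n+2*m))]
              · have hG : GM P φ m ⟨n, hNn⟩ j = 1 :=
                  gEnt_one P φ (le_refl n) (by simpa using hjn1.symm) (by simp)
                rw [hG]; ring
              · intro i _ hi
                have hi' : (i:ℕ) ≠ n := fun h => hi (Fin.ext h)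
                have hG : GM P φ m i j = 0 :=
                  gEnt_eq_zero P φ (by omega) (by omega) (by omega)
                rw [hG]; ring
              · intro h; exact absurd (Finset.mem_univ _) h
            have hM : M1 P φ m u a l j
                = -(P.sigma (u ⟨n, hNn⟩) * (P.i * P.i) + a * P.i + u ⟨n, hNn⟩) := by
              simp only [M1]
              rw [dif_pos hjn1.symm, dif_neg (by omega), dif_pos hl]
            rw [hM, hin, if_neg (by simp [Fin.ext_iff]; omega), if_pos hjb, hjb]
            ring
          · -- j > n + 1
            rcases Nat.even_or_odd ((j:ℕ) - n) with hpar | hpar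
            · -- (j - n) even
              have hp : ((j:ℕ) - n) % 2 = 0 := Nat.even_iff.mp hpar
              have hj1lt : (j:ℕ) + 1 < n + 2*m := by
                have := j.isLt; omega
              have hin : ∑ i, P.sigma (u i) * P.i * GM P φ m i j * w j
                  = P.sigma (u ⟨(j:ℕ)+1, hj1lt⟩) * P.i * (-(P.sigma 1)) * w j := by
                rw [Finset.sum_eq_single (⟨(j:ℕ)+1, hj1lt⟩ : Fin (n+2*m))]
                · have hG : GM P φ m ⟨(j:ℕ)+1, hj1lt⟩ j = -(P.sigma 1) :=
                    gEnt_negbar P φ (by omega) (by simp) hp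
                  rw [hG]
                · intro i _ hi
                  have hi' : (i:ℕ) ≠ (j:ℕ) + 1 := fun h => hi (Fin.ext h)
                  have hG : GM P φ m i j = 0 :=
                    gEnt_eq_zero P φ (by omega) (by omega) (by omega)
                  rw [hG]; ring
                · intro h; exact absurd (Finset.mem_univ _) h
              have hM : M1 P φ m u a l j = P.i * P.sigma (u ⟨(j:ℕ)+1, hj1lt⟩) := by
                simp only [M1]
                rw [dif_neg (by omega), dif_pos hl, dif_neg (by omega), dif_neg (by omega),
                  dif_pos hp]
              rw [hM, hin, if_neg (by simp [Fin.ext_iff]; omega),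
                if_neg (by simp [Fin.ext_iff]; omega)]
              linear_combination (-(P.i * P.sigma (u ⟨(j:ℕ)+1, hj1lt⟩) * w j)) * hbar
            · -- (j - n) odd
              have hp : ((j:ℕ) - n) % 2 = 1 := Nat.odd_iff.mp hpar
              have hjm : (j:ℕ) - 1 < n + 2*m := by have := j.isLt; omega
              have hin : ∑ i, P.sigma (u i) * P.i * GM P φ m i j * w j
                  = P.sigma (u ⟨(j:ℕ)-1, hjm⟩) * P.i * w j := by
                rw [Finset.sum_eq_single (⟨(j:ℕ)-1, hjm⟩ : Fin (n+2*m))]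
                · have hG : GM P φ m ⟨(j:ℕ)-1, hjm⟩ j = 1 :=
                    gEnt_one P φ (by simp; omega) (by simp; omega) (by simp; omega)
                  rw [hG]; ring
                · intro i _ hi
                  have hi' : (i:ℕ) ≠ (j:ℕ) - 1 := fun h => hi (Fin.ext h)
                  have hG : GM P φ m i j = 0 :=
                    gEnt_eq_zero P φ (by omega) (by omega) (by omega)
                  rw [hG]; ring
                · intro h; exact absurd (Finset.mem_univ _) h
              have hM : M1 P φ m u a l j = -(P.i * P.i) * P.sigma (u ⟨(j:ℕ)-1, hjm⟩) := by
                simp only [M1]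
                rw [dif_neg (by omega), dif_pos hl, dif_neg (by omega), dif_neg (by omega),
                  dif_neg (by omega)]
              rw [hM, hin, if_neg (by simp [Fin.ext_iff]; omega),
                if_neg (by simp [Fin.ext_iff]; omega)]
              ring
    have hsum : ∑ j, (M1 P φ m u a l j * w j
          + P.i * ∑ i, P.sigma (u i) * P.i * GM P φ m i j * w j)
        = w ⟨n, hNn⟩ + (-(P.i * a) - u ⟨n, hNn⟩) * w ⟨n+1, hNn1⟩ := by
      rw [Finset.sum_congr rfl (fun j _ => key j), Finset.sum_add_distrib,
        Finset.sum_ite_eq' Finset.univ (⟨n, hNn⟩ : Fin (n+2*m)),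
        Finset.sum_ite_eq' Finset.univ (⟨n+1, hNn1⟩ : Fin (n+2*m))]
      simp
    have hsplit : ∑ j, (M1 P φ m u a l j * w j
          + P.i * ∑ i, P.sigma (u i) * P.i * GM P φ m i j * w j)
        = (∑ j, M1 P φ m u a l j * w j) + P.i * formV P φ m u w := by
      rw [Finset.sum_add_distrib, ← Finset.mul_sum, formV, Finset.sum_comm]
    rw [he1]
    subst hlval
    linear_combination hsplit - hsum
  · -- rows other than the e₁ row
    have he0 : e1vec R n m l = 0 := by simp [e1vec, hl]
    rw [he0]
    by_cases hl1 : (l:ℕ) = n + 1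
    · have hlval : l = ⟨n+1, hNn1⟩ := Fin.ext hl1
      have hM : ∀ j : Fin (n+2*m), M1 P φ m u a l j
          = if j = (⟨n+1, hNn1⟩ : Fin (n+2*m)) then 1 else 0 := by
        intro j
        by_cases hj : (j:ℕ) = n + 1
        · rw [if_pos (Fin.ext hj)]
          simp only [M1]
          rw [dif_pos hj, dif_neg (by omega), dif_neg (by omega), dif_pos hl1]
        · rw [if_neg (fun h => hj (by rw [h]))]
          simp only [M1]
          rw [dif_neg hj, dif_neg (by omega), if_neg (by omega)]
      rw [Finset.sum_congr rfl (fun j _ => by rw [hM j])]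
      have : ∑ j, (if j = (⟨n+1, hNn1⟩ : Fin (n+2*m)) then 1 else 0) * w j = w ⟨n+1, hNn1⟩ := by
        rw [Finset.sum_congr rfl (fun j _ => by rw [ite_mul, one_mul, zero_mul]),
          Finset.sum_ite_eq' Finset.univ (⟨n+1, hNn1⟩ : Fin (n+2*m))]
        simp
      rw [this, hlval, hu']
      ring
    · have key : ∀ j : Fin (n+2*m), M1 P φ m u a l j * w j
          = (if j = l then w l else 0)
            + (if j = (⟨n+1, hNn1⟩ : Fin (n+2*m)) then -u l * w ⟨n+1, hNn1⟩ else 0) := by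
        intro j
        by_cases hj : (j:ℕ) = n + 1
        · have hjb : j = (⟨n+1, hNn1⟩ : Fin (n+2*m)) := Fin.ext hj
          have hjl : j ≠ l := fun h => hl1 (by rw [← h, hj])
          have hM : M1 P φ m u a l j = -u l := by
            simp only [M1]
            rw [dif_pos hj]
            by_cases hln : (l:ℕ) < n
            · rw [dif_pos hln]
            · rw [dif_neg hln, dif_neg hl, dif_neg hl1]
          rw [if_neg hjl, if_pos hjb, hM, hjb]
          ring
        · have hjb : j ≠ (⟨n+1, hNn1⟩ : Fin (n+2*m)) := fun h => hj (by rw [h])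
          rw [if_neg hjb]
          have hM : M1 P φ m u a l j = if (l:ℕ) = (j:ℕ) then 1 else 0 := by
            simp only [M1]
            rw [dif_neg hj, dif_neg hl]
          rw [hM]
          by_cases hlj : l = j
          · rw [if_pos (by rw [hlj]), if_pos hlj.symm, hlj]
            ring
          · rw [if_neg (fun h => hlj (Fin.ext h)), if_neg (fun h => hlj h.symm)]
            ring
      rw [Finset.sum_congr rfl (fun j _ => key j), Finset.sum_add_distrib,
        Finset.sum_ite_eq' Finset.univ l, Finset.sum_ite_eq' Finset.univ (⟨n+1, hNn1⟩ : Fin (n+2*m))]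
      simp only [Finset.mem_univ, if_true]
      ring

end OddUnitary
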